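/- arXiv:2310.15199 — 6 statements merged into one kernel-verified Lean document; each statement's English description precedes it below -/
import Mathlib

section
/- If f₁, f₂ ∈ k[x₁, x₂] over a field k and the Jacobian determinant ∂(f₁,f₂)/∂(x₁,x₂) = (∂f₁/∂x₁)(∂f₂/∂x₂) − (∂f₁/∂x₂)(∂f₂/∂x₁) is nonzero, then f₁ and f₂ are algebraically independent over k. -/
open MvPolynomial

lemma chainRule {K : Type*} [CommSemiring K] (f : Fin 2 → MvPolynomial (Fin 2) K)
    (j : Fin 2) (P : MvPolynomial (Fin 2) K) :
    pderiv j (aeval f P) =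
      aeval f (pderiv 0 P) * pderiv j (f 0) + aeval f (pderiv 1 P) * pderiv j (f 1) := by
  induction P using MvPolynomial.induction_on with
  | C a => simp [aeval_C, algebraMap_eq, pderiv_C]
  | add p q hp hq => simp only [map_add, hp, hq]; ring
  | mul_X p i hp =>
    fin_cases i <;>
      · simp only [map_mul, aeval_X, pderiv_mul, hp, pderiv_X_self, pderiv_X_of_ne,
          Fin.ext_iff, Fin.isValue, mul_one, mul_zero, add_zero, zero_add, map_zero,
          pderiv_X, ne_eq, Fin.zero_eta, Fin.mk_one, one_ne_zero, not_false_iff,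
          zero_ne_one]
        simp only [map_add, map_mul, aeval_X]
        ring

lemma pderiv_as_sum {R : Type*} [CommSemiring R] {σ : Type*} (i : σ) (P : MvPolynomial σ R) :
    pderiv i P = ∑ s ∈ P.support, monomial (s - Finsupp.single i 1) (P.coeff s * s i) := by
  conv_lhs => rw [P.as_sum]
  rw [map_sum]
  simp [pderiv_monomial]

lemma sum_sub_single {σ : Type*} (s : σ →₀ ℕ) (i : σ) (h : s i ≠ 0) :
    (s - Finsupp.single i 1).sum (fun _ e => e) + 1 = s.sum (fun _ e => e) := by
  have hle : Finsupp.single i 1 ≤ s := by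
    rw [Finsupp.single_le_iff]; omega
  have h2 : (s - Finsupp.single i 1) + Finsupp.single i 1 = s := tsub_add_cancel_of_le hle
  conv_rhs => rw [← h2]
  rw [Finsupp.sum_add_index' (fun _ => rfl) (fun _ _ _ => rfl)]
  simp [Finsupp.sum_single_index]

lemma totalDegree_pderiv_lt {R : Type*} [CommRing R] {σ : Type*} (i : σ)
    {P : MvPolynomial σ R} (h : 0 < P.totalDegree) :
    (pderiv i P).totalDegree < P.totalDegree := by
  rw [pderiv_as_sum]
  refine lt_of_le_of_lt (totalDegree_finset_sum _ _) ?_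
  rw [Finset.sup_lt_iff h]
  intro s hs
  by_cases hsi : s i = 0
  · simpa [hsi] using h
  · refine lt_of_le_of_lt (totalDegree_monomial_le _ _) ?_
    have h1 := sum_sub_single s i hsi
    simp only [Function.id_def] at h1 ⊢
    have h2 : s.sum (fun _ e => e) ≤ P.totalDegree := le_totalDegree hs
    omega

lemma pderiv_as_sum' {R : Type*} [CommSemiring R] {σ : Type*} (i : σ) (P : MvPolynomial σ R) :
    pderiv i P = ∑ s ∈ P.support, monomial (s - Finsupp.single i 1) (P.coeff s * s i) := by
  conv_lhs => rw [P.as_sum]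
  rw [map_sum]
  simp [pderiv_monomial]

lemma cast_exp_eq_zero {K : Type*} [Field K] {σ : Type*} {i : σ} {P : MvPolynomial σ K}
    (h : pderiv i P = 0) {s : σ →₀ ℕ} (hs : s ∈ P.support) : (s i : K) = 0 := by
  classical
  by_cases hsi : s i = 0
  · simp [hsi]
  have hc : P.coeff s ≠ 0 := mem_support_iff.1 hs
  have h0 : coeff (s - Finsupp.single i 1) (pderiv i P) = 0 := by rw [h]; simp
  rw [pderiv_as_sum'] at h0
  rw [coeff_sum] at h0
  have key : ∀ t ∈ P.support, t ≠ s →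
      coeff (s - Finsupp.single i 1) (monomial (t - Finsupp.single i 1) (P.coeff t * t i)) = 0 := by
    intro t ht hts
    rw [coeff_monomial]
    split_ifs with he
    · by_cases hti : t i = 0
      · simp [hti]
      · exfalso
        apply hts
        have hlt : Finsupp.single i 1 ≤ t := by rw [Finsupp.single_le_iff]; omega
        have hls : Finsupp.single i 1 ≤ s := by rw [Finsupp.single_le_iff]; omega
        calc t = t - Finsupp.single i 1 + Finsupp.single i 1 := (tsub_add_cancel_of_le hlt).symm
        _ = s - Finsupp.single i 1 + Finsupp.single i 1 := by rw [he]
        _ = s := tsub_add_cancel_of_le hls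
    · rfl
  rw [Finset.sum_eq_single s key (fun hns => absurd hs hns)] at h0
  rw [coeff_monomial, if_pos rfl] at h0
  rcases mul_eq_zero.1 h0 with h1 | h1
  · exact absurd h1 hc
  · exact h1

lemma exists_pth_root {K : Type*} [Field K] {σ : Type*} (p : ℕ) [Fact p.Prime]
    [CharP K p] [PerfectRing K p] {P : MvPolynomial σ K}
    (hdiv : ∀ s ∈ P.support, ∀ i, p ∣ s i) (htd : 0 < P.totalDegree) :
    ∃ Q : MvPolynomial σ K, Q ^ p = P ∧ Q.totalDegree < P.totalDegree := by
  classical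
  have hp1 : 1 < p := (Fact.out : p.Prime).one_lt
  set g : (σ →₀ ℕ) → (σ →₀ ℕ) := fun s => s.mapRange (· / p) (Nat.zero_div _) with hg
  refine ⟨∑ s ∈ P.support, monomial (g s) ((frobeniusEquiv K p).symm (P.coeff s)), ?_, ?_⟩
  · haveI : ExpChar K p := ExpChar.prime (Fact.out : p.Prime)
    haveI : CharP (MvPolynomial σ K) p :=
      charP_of_injective_ringHom (C_injective σ K) p
    haveI : ExpChar (MvPolynomial σ K) p := ExpChar.prime (Fact.out : p.Prime)
    rw [sum_pow_char]
    have : ∀ s ∈ P.support,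
        (monomial (g s) ((frobeniusEquiv K p).symm (P.coeff s))) ^ p = monomial s (P.coeff s) := by
      intro s hs
      have hexp : p • g s = s := by
        ext i
        simp only [hg, Finsupp.smul_apply, Finsupp.mapRange_apply, smul_eq_mul]
        exact Nat.mul_div_cancel' (hdiv s hs i)
      rw [monomial_pow, hexp]
      congr 1
      exact frobenius_apply_frobeniusEquiv_symm K p _
    rw [Finset.sum_congr rfl this]
    exact P.as_sum.symm
  · refine lt_of_le_of_lt (totalDegree_finset_sum _ _) ?_
    rw [Finset.sup_lt_iff htd]
    intro s hs
    refine lt_of_le_of_lt (totalDegree_monomial_le _ _) ?_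
    have hsum : (g s).sum (fun _ e => e) * p = s.sum (fun _ e => e) := by
      rw [Finsupp.sum_of_support_subset _ (Finsupp.support_mapRange) _ (fun _ _ => rfl),
        Finset.sum_mul]
      rw [Finsupp.sum]
      refine Finset.sum_congr rfl fun i _ => ?_
      simp only [hg, Finsupp.mapRange_apply]
      exact Nat.div_mul_cancel (hdiv s hs i)
    have h2 : s.sum (fun _ e => e) ≤ P.totalDegree := le_totalDegree hs
    simp only [Function.id_def]
    nlinarith [Nat.zero_le ((g s).sum fun _ e => e)]

theorem mainK {K : Type*} [Field K] [PerfectField K] (f₁ f₂ : MvPolynomial (Fin 2) K)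
    (hJ : pderiv 0 f₁ * pderiv 1 f₂ - pderiv 1 f₁ * pderiv 0 f₂ ≠ 0) :
    ∀ (n : ℕ) (P : MvPolynomial (Fin 2) K), P.totalDegree < n →
      aeval ![f₁, f₂] P = 0 → P = 0 := by
  intro n
  induction n with
  | zero => exact fun P h => absurd h (Nat.not_lt_zero _)
  | succ n ih =>
    intro P hd h0
    by_cases htd : P.totalDegree = 0
    · -- P is a constant
      have hz := (totalDegree_eq_zero_iff _ P).1 htd
      have hP : P = C (P.coeff 0) := by
        ext m
        rw [coeff_C]
        split_ifs with h
        · rw [← h]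
        · by_contra hc
          exact h (Finsupp.ext fun i => (hz m (mem_support_iff.2 hc) i).symm ▸ rfl).symm
      rw [hP] at h0 ⊢
      rw [aeval_C] at h0
      have hc0 : P.coeff 0 = 0 := by
        have := (algebraMap K (MvPolynomial (Fin 2) K)).injective (by simpa using h0)
        simpa using this
      rw [hc0, map_zero]
    · have htd' : 0 < P.totalDegree := Nat.pos_of_ne_zero htd
      set a := aeval ![f₁, f₂] (pderiv 0 P) with ha
      set b := aeval ![f₁, f₂] (pderiv 1 P) with hb
      have h1 : ∀ j : Fin 2, a * pderiv j f₁ + b * pderiv j f₂ = 0 := by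
        intro j
        have hc := chainRule ![f₁, f₂] j P
        rw [h0, map_zero] at hc
        rw [← ha, ← hb] at hc
        simpa [Matrix.cons_val_zero, Matrix.cons_val_one, Matrix.head_cons] using hc.symm
      have hJa : a * (pderiv 0 f₁ * pderiv 1 f₂ - pderiv 1 f₁ * pderiv 0 f₂) = 0 := by
        linear_combination pderiv 1 f₂ * h1 0 - pderiv 0 f₂ * h1 1
      have hJb : b * (pderiv 0 f₁ * pderiv 1 f₂ - pderiv 1 f₁ * pderiv 0 f₂) = 0 := by
        linear_combination pderiv 0 f₁ * h1 1 - pderiv 1 f₁ * h1 0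
      have ha0 : a = 0 := by rcases mul_eq_zero.1 hJa with h | h; exact h; exact absurd h hJ
      have hb0 : b = 0 := by rcases mul_eq_zero.1 hJb with h | h; exact h; exact absurd h hJ
      have hpd : ∀ i : Fin 2, pderiv i P = 0 := by
        intro i
        by_cases hne : pderiv i P = 0
        · exact hne
        · refine ih _ (lt_of_lt_of_le (totalDegree_pderiv_lt i htd') (Nat.lt_succ_iff.1 hd)) ?_
          fin_cases i
          · exact ha0
          · exact hb0
      -- characteristic analysis
      haveI := ringChar.charP K
      rcases CharP.char_is_prime_or_zero K (ringChar K) with hp | hp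
      · haveI : Fact (ringChar K).Prime := ⟨hp⟩
        haveI : ExpChar K (ringChar K) := ExpChar.prime hp
        have hdiv : ∀ s ∈ P.support, ∀ i, ringChar K ∣ s i := by
          intro s hs i
          have := cast_exp_eq_zero (hpd i) hs
          exact (CharP.cast_eq_zero_iff K (ringChar K) _).1 this
        obtain ⟨Q, hQ, hQd⟩ := exists_pth_root (ringChar K) hdiv htd'
        have hQ0 : aeval ![f₁, f₂] Q = 0 := by
          have : (aeval ![f₁, f₂] Q) ^ ringChar K = 0 := by
            rw [← map_pow, hQ, h0]
          exact pow_eq_zero_iff hp.ne_zero |>.1 this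
        have := ih Q (lt_of_lt_of_le hQd (Nat.lt_succ_iff.1 hd)) hQ0
        rw [← hQ, this, zero_pow hp.ne_zero]
      · haveI : CharP K 0 := hp ▸ (ringChar.charP K)
        haveI : CharZero K := CharP.charP_to_charZero K
        exfalso
        apply htd
        rw [totalDegree_eq_zero_iff]
        intro s hs i
        have := cast_exp_eq_zero (hpd i) hs
        exact_mod_cast this

lemma map_aeval_comm {k K : Type*} [Field k] [Field K] (φ : k →+* K)
    (g : Fin 2 → MvPolynomial (Fin 2) k) (P : MvPolynomial (Fin 2) k) :
    map φ (aeval g P) = aeval (fun i => map φ (g i)) (map φ P) := by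
  induction P using MvPolynomial.induction_on with
  | C a => simp [aeval_C, algebraMap_eq]
  | add p q hp hq => simp only [map_add, hp, hq]
  | mul_X p i hp => simp only [map_mul, map_X, aeval_X, hp]

theorem stmt_0 {k : Type*} [Field k] (f₁ f₂ : MvPolynomial (Fin 2) k)
    (hJ : pderiv 0 f₁ * pderiv 1 f₂ - pderiv 1 f₁ * pderiv 0 f₂ ≠ 0) :
    AlgebraicIndependent k ![f₁, f₂] := by
  rw [algebraicIndependent_iff]
  intro P hP
  set K := AlgebraicClosure k
  set φ := (algebraMap k K)
  have hinj : Function.Injective (MvPolynomial.map φ (σ := Fin 2)) :=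
    MvPolynomial.map_injective φ (algebraMap k K).injective
  have hJ' : pderiv 0 (map φ f₁) * pderiv 1 (map φ f₂)
      - pderiv 1 (map φ f₁) * pderiv 0 (map φ f₂) ≠ 0 := by
    rw [pderiv_map, pderiv_map, pderiv_map, pderiv_map, ← map_mul, ← map_mul, ← map_sub]
    intro h
    exact hJ (hinj (by simpa using h))
  have h0 : aeval ![map φ f₁, map φ f₂] (map φ P) = 0 := by
    have := map_aeval_comm φ ![f₁, f₂] P
    rw [hP, map_zero] at this
    have he : (fun i => map φ (![f₁, f₂] i)) = ![map φ f₁, map φ f₂] := by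
      funext i; fin_cases i <;> simp
    rw [he] at this
    exact this.symm
  have := mainK (map φ f₁) (map φ f₂) hJ' ((map φ P).totalDegree + 1) (map φ P)
    (Nat.lt_succ_self _) h0
  exact hinj (by simpa using this)
end

section
/- If f₁, f₂ ∈ k[x₁, x₂] and the Jacobian determinant ∂(f₁,f₂)/∂(x₁,x₂) is nonzero, then the field extension k(x₁,x₂)/k(f₁,f₂) is separable algebraic. -/
open MvPolynomial

lemma cramer_aux {K M : Type*} [Field K] [AddCommGroup M] [Module K M]
    (a₁ b₁ a₂ b₂ : K) (ω₀ ω₁ : M) (e₁ : a₁ • ω₀ + b₁ • ω₁ = 0)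
    (e₂ : a₂ • ω₀ + b₂ • ω₁ = 0) (hJ : a₁ * b₂ - b₁ * a₂ ≠ 0) :
    ω₀ = 0 ∧ ω₁ = 0 := by
  have hc₀ : (a₁ * b₂ - b₁ * a₂) • ω₀
      = b₂ • (a₁ • ω₀ + b₁ • ω₁) - b₁ • (a₂ • ω₀ + b₂ • ω₁) := by module
  have hc₁ : (a₁ * b₂ - b₁ * a₂) • ω₁
      = a₁ • (a₂ • ω₀ + b₂ • ω₁) - a₂ • (a₁ • ω₀ + b₁ • ω₁) := by module
  rw [e₁, e₂, smul_zero, smul_zero, sub_zero] at hc₀ hc₁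
  constructor
  · have h : ω₀ = (a₁ * b₂ - b₁ * a₂)⁻¹ • ((a₁ * b₂ - b₁ * a₂) • ω₀) := by
      rw [smul_smul, inv_mul_cancel₀ hJ, one_smul]
    rw [h, hc₀, smul_zero]
  · have h : ω₁ = (a₁ * b₂ - b₁ * a₂)⁻¹ • ((a₁ * b₂ - b₁ * a₂) • ω₁) := by
      rw [smul_smul, inv_mul_cancel₀ hJ, one_smul]
    rw [h, hc₁, smul_zero]

set_option maxHeartbeats 2000000 in
theorem stmt_1 {k : Type*} [Field k] (f₁ f₂ : MvPolynomial (Fin 2) k)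
    (hJ : pderiv 0 f₁ * pderiv 1 f₂ - pderiv 1 f₁ * pderiv 0 f₂ ≠ 0) :
    let K := FractionRing (MvPolynomial (Fin 2) k)
    let F : IntermediateField k K :=
      IntermediateField.adjoin k
        {algebraMap (MvPolynomial (Fin 2) k) K f₁, algebraMap (MvPolynomial (Fin 2) k) K f₂}
    Algebra.IsAlgebraic F K ∧ Algebra.IsSeparable F K := by
  intro K F
  let ι : MvPolynomial (Fin 2) k →+* K := algebraMap (MvPolynomial (Fin 2) k) K
  have hinj : Function.Injective ι := IsFractionRing.injective (MvPolynomial (Fin 2) k) K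
  -- the derivative formula
  let φ : Ω[MvPolynomial (Fin 2) k⁄k] →ₗ[MvPolynomial (Fin 2) k] Ω[K⁄F] :=
    KaehlerDifferential.map k F (MvPolynomial (Fin 2) k) K
  have key : ∀ p : MvPolynomial (Fin 2) k, KaehlerDifferential.D F K (ι p)
      = ι (pderiv 0 p) • KaehlerDifferential.D F K (ι (X 0))
      + ι (pderiv 1 p) • KaehlerDifferential.D F K (ι (X 1)) := by
    intro p
    have hb := (KaehlerDifferential.mvPolynomialBasis k (Fin 2)).sum_repr
        (KaehlerDifferential.D k (MvPolynomial (Fin 2) k) p)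
    rw [Fin.sum_univ_two] at hb
    simp only [KaehlerDifferential.mvPolynomialBasis_repr_apply,
      KaehlerDifferential.mvPolynomialBasis_apply] at hb
    have h2 := congrArg φ hb
    rw [map_add, LinearMap.map_smul, LinearMap.map_smul] at h2
    simp only [φ, KaehlerDifferential.map_D] at h2
    rw [← h2, algebraMap_smul, algebraMap_smul]
  -- D vanishes on elements of F
  have hF : ∀ x : K, x ∈ F → KaehlerDifferential.D F K x = 0 := by
    intro x hx
    have : x = algebraMap F K ⟨x, hx⟩ := rfl
    rw [this, Derivation.map_algebraMap]
  have hf₁ : KaehlerDifferential.D F K (ι f₁) = 0 :=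
    hF _ (IntermediateField.subset_adjoin k _ (Set.mem_insert _ _))
  have hf₂ : KaehlerDifferential.D F K (ι f₂) = 0 :=
    hF _ (IntermediateField.subset_adjoin k _ (Set.mem_insert_of_mem _ rfl))
  -- solve the linear system
  set ω₀ := KaehlerDifferential.D F K (ι (X 0)) with hω₀
  set ω₁ := KaehlerDifferential.D F K (ι (X 1)) with hω₁
  have e₁ : ι (pderiv 0 f₁) • ω₀ + ι (pderiv 1 f₁) • ω₁ = 0 := by
    rw [← key f₁, hf₁]
  have e₂ : ι (pderiv 0 f₂) • ω₀ + ι (pderiv 1 f₂) • ω₁ = 0 := by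
    rw [← key f₂, hf₂]
  have hJK : ι (pderiv 0 f₁) * ι (pderiv 1 f₂) - ι (pderiv 1 f₁) * ι (pderiv 0 f₂) ≠ 0 := by
    intro h
    apply hJ
    apply hinj
    rw [map_sub, map_mul, map_mul, map_zero]
    exact h
  obtain ⟨hω₀0, hω₁0⟩ := cramer_aux _ _ _ _ ω₀ ω₁ e₁ e₂ hJK
  -- D vanishes on the image of the polynomial ring
  have hDA : ∀ p : MvPolynomial (Fin 2) k, KaehlerDifferential.D F K (ι p) = 0 := by
    intro p
    rw [key p, hω₀0, hω₁0, smul_zero, smul_zero, add_zero]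
  -- D vanishes everywhere
  have hD : ∀ x : K, KaehlerDifferential.D F K x = 0 := by
    intro x
    obtain ⟨⟨p, q⟩, hq⟩ := IsLocalization.surj (nonZeroDivisors (MvPolynomial (Fin 2) k)) x
    have hq0 : ι (q : MvPolynomial (Fin 2) k) ≠ 0 := by
      intro h
      exact nonZeroDivisors.coe_ne_zero q (hinj (by rw [map_zero]; exact h))
    have hc := congrArg (KaehlerDifferential.D F K) hq
    rw [Derivation.leibniz] at hc
    have hDA' : ∀ p : MvPolynomial (Fin 2) k,
        KaehlerDifferential.D F K (algebraMap (MvPolynomial (Fin 2) k) K p) = 0 := hDA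
    simp only [hDA', smul_zero, zero_add] at hc
    have h : KaehlerDifferential.D F K x
        = (ι (q : MvPolynomial (Fin 2) k))⁻¹
          • (ι (q : MvPolynomial (Fin 2) k) • KaehlerDifferential.D F K x) := by
      rw [smul_smul, inv_mul_cancel₀ hq0, one_smul]
    rw [h, hc, smul_zero]
  -- Ω[K/F] is trivial
  have hsub : Subsingleton (Ω[K⁄F]) := by
    refine subsingleton_of_forall_eq 0 fun x => ?_
    have hx : x ∈ Submodule.span K (Set.range (KaehlerDifferential.D F K)) := by
      rw [KaehlerDifferential.span_range_derivation]; trivial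
    have hsubset : Set.range (KaehlerDifferential.D F K) ⊆ {0} := by
      rintro _ ⟨y, rfl⟩; exact hD y
    have := Submodule.span_mono (R := K) hsubset hx
    simpa [eq_comm] using this
  have hur : Algebra.FormallyUnramified F K := ⟨hsub⟩
  have heft : Algebra.EssFiniteType F K := by
    have h3 : Algebra.EssFiniteType (MvPolynomial (Fin 2) k) K :=
      Algebra.EssFiniteType.of_isLocalization (R := MvPolynomial (Fin 2) k) (S := K)
        (nonZeroDivisors (MvPolynomial (Fin 2) k))
    have h4 : Algebra.EssFiniteType k K :=
      Algebra.EssFiniteType.comp k (MvPolynomial (Fin 2) k) K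
    exact Algebra.EssFiniteType.of_comp k F K
  have hsep : Algebra.IsSeparable F K := Algebra.FormallyUnramified.isSeparable F K
  exact ⟨Algebra.IsSeparable.isAlgebraic F K, hsep⟩
end

section
/- If f₁, f₂ ∈ k[x₁, x₂] and the Jacobian determinant ∂(f₁,f₂)/∂(x₁,x₂) is a nonzero constant, then any common divisor g of f₁ and f₂ in k[x₁,x₂] is a unit (i.e., gcd(f₁,f₂) = 1). -/
open MvPolynomial

theorem stmt_3 {k : Type*} [Field k] (f₁ f₂ : MvPolynomial (Fin 2) k)
    (hJ : ∃ c : k, c ≠ 0 ∧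
      pderiv 0 f₁ * pderiv 1 f₂ - pderiv 1 f₁ * pderiv 0 f₂ = C c)
    (g : MvPolynomial (Fin 2) k) (hg1 : g ∣ f₁) (hg2 : g ∣ f₂) :
    IsUnit g := by
  obtain ⟨c, hc, hJ⟩ := hJ
  obtain ⟨a, rfl⟩ := hg1
  obtain ⟨b, rfl⟩ := hg2
  have hdvd : g ∣ C c := by
    rw [← hJ]
    simp only [pderiv_mul]
    exact ⟨pderiv 0 g * a * pderiv 1 b + pderiv 0 a * pderiv 1 g * b
      - pderiv 1 g * a * pderiv 0 b - pderiv 1 a * pderiv 0 g * b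
      + g * (pderiv 0 a * pderiv 1 b - pderiv 1 a * pderiv 0 b), by ring⟩
  exact isUnit_of_dvd_unit hdvd (IsUnit.of_mul_eq_one (a := C c) (C c⁻¹) (by rw [← C_mul, mul_inv_cancel₀ hc, C_1]))
end

section
/- Let k have characteristic p > 0 and let h(x₁,x₂) ∈ k[x₁,x₂]. The polynomial m(t) = t + h(x₁, t^p) − (x₂ + h(x₁, x₂^p)) is irreducible in k(x₁, x₂ + h(x₁,x₂^p))[t]. -/
set_option maxHeartbeats 1000000

open MvPolynomial

section Stmt7Aux

open Polynomial

variable {k : Type*} [Field k]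

private lemma stmt7_coeff_aeval {S : Type*} [CommRing S] [Algebra k S]
    (p : ℕ) (hp0 : 0 < p) (h : MvPolynomial (Fin 2) k) (c : S) {n : ℕ} (hn : ¬ p ∣ n) :
    (MvPolynomial.aeval ![Polynomial.C c, Polynomial.X ^ p] h).coeff n = 0 := by
  have hcomp :
      (((Polynomial.expand S p).restrictScalars k).comp
          (MvPolynomial.aeval (R := k) ![Polynomial.C c, Polynomial.X])) =
        MvPolynomial.aeval ![Polynomial.C c, Polynomial.X ^ p] := by
    rw [MvPolynomial.comp_aeval]
    congr 1
    funext i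
    fin_cases i <;> simp
  have h2 := DFunLike.congr_fun hcomp h
  simp only [AlgHom.coe_comp, Function.comp_apply, AlgHom.coe_restrictScalars'] at h2
  rw [← h2, Polynomial.coeff_expand hp0, if_neg hn]

private noncomputable def stmt7_phiD (p : ℕ) (h : MvPolynomial (Fin 2) k) :
    Polynomial (Polynomial k) :=
  Polynomial.X + MvPolynomial.aeval (R := k) (S₁ := Polynomial (Polynomial k))
    ![Polynomial.C (Polynomial.X : Polynomial k),
      (Polynomial.X : Polynomial (Polynomial k)) ^ p] h

private lemma stmt7_not_dvd_one {p : ℕ} (hp2 : 2 ≤ p) : ¬ p ∣ 1 := by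
  intro hd
  exact absurd (Nat.le_of_dvd one_pos hd) (by omega)

private lemma stmt7_phiD_coeff_one (p : ℕ) (hp2 : 2 ≤ p) (h : MvPolynomial (Fin 2) k) :
    (stmt7_phiD (k := k) p h).coeff 1 = 1 := by
  unfold stmt7_phiD
  rw [Polynomial.coeff_add, Polynomial.coeff_X_one,
    stmt7_coeff_aeval p (by omega) h _ (stmt7_not_dvd_one hp2), add_zero]

private lemma stmt7_comp_phiD_injective (p : ℕ) (hp2 : 2 ≤ p) (h : MvPolynomial (Fin 2) k) :
    Function.Injective
      (Polynomial.eval₂RingHom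
        (Polynomial.C : Polynomial k →+* Polynomial (Polynomial k)) (stmt7_phiD p h)) := by
  have h1 : (stmt7_phiD (k := k) p h).coeff 1 = 1 := stmt7_phiD_coeff_one p hp2 h
  intro q₁ q₂ hq
  have hz : (q₁ - q₂).comp (stmt7_phiD p h) = 0 := by
    have : ∀ q : Polynomial (Polynomial k),
        (Polynomial.eval₂RingHom Polynomial.C (stmt7_phiD p h)) q
          = q.comp (stmt7_phiD p h) := fun q => rfl
    rw [Polynomial.sub_comp, ← this, ← this, hq, sub_self]
  rcases Polynomial.comp_eq_zero_iff.mp hz with h0 | ⟨_, hC⟩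
  · exact sub_eq_zero.mp h0
  · exfalso
    rw [hC, Polynomial.coeff_C] at h1
    simp at h1


private lemma stmt7_ringHom_aeval {S T : Type*} [CommSemiring S] [CommSemiring T]
    [Algebra k S] [Algebra k T] (f : S →+* T)
    (hfc : ∀ c : k, f (algebraMap k S c) = algebraMap k T c)
    (v : Fin 2 → S) (w : Fin 2 → T) (hv : ∀ i, f (v i) = w i)
    (h : MvPolynomial (Fin 2) k) :
    f (MvPolynomial.aeval v h) = MvPolynomial.aeval w h := by
  induction h using MvPolynomial.induction_on with
  | C c => rw [MvPolynomial.aeval_C, MvPolynomial.aeval_C, hfc]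
  | add q r hq hr => rw [map_add, map_add, map_add, hq, hr]
  | mul_X q i hq =>
      rw [map_mul, map_mul, map_mul, hq, MvPolynomial.aeval_X, MvPolynomial.aeval_X, hv]

/-- The swap of the two outer variables on `S[v][t]`. -/
private noncomputable def stmt7_swap (S : Type*) [CommSemiring S] :
    Polynomial (Polynomial S) →+* Polynomial (Polynomial S) :=
  Polynomial.eval₂RingHom
    (Polynomial.eval₂RingHom (Polynomial.C.comp Polynomial.C) Polynomial.X)
    (Polynomial.C Polynomial.X)

private lemma stmt7_swap_CC {S : Type*} [CommSemiring S] (a : S) :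
    stmt7_swap S (Polynomial.C (Polynomial.C a)) = Polynomial.C (Polynomial.C a) := by
  simp [stmt7_swap]

private lemma stmt7_swap_CX {S : Type*} [CommSemiring S] :
    stmt7_swap S (Polynomial.C Polynomial.X) = Polynomial.X := by
  simp [stmt7_swap]

private lemma stmt7_swap_X {S : Type*} [CommSemiring S] :
    stmt7_swap S (Polynomial.X : Polynomial (Polynomial S)) = Polynomial.C Polynomial.X := by
  simp [stmt7_swap]

private lemma stmt7_swap_comp_swap (S : Type*) [CommSemiring S] :
    (stmt7_swap S).comp (stmt7_swap S) = RingHom.id _ := by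
  apply Polynomial.ringHom_ext'
  · apply Polynomial.ringHom_ext'
    · ext a
      simp [stmt7_swap_CC]
    · simp [stmt7_swap_CX, stmt7_swap_X]
  · simp [stmt7_swap_CX, stmt7_swap_X]

private noncomputable def stmt7_swapEquiv (S : Type*) [CommSemiring S] :
    Polynomial (Polynomial S) ≃+* Polynomial (Polynomial S) :=
  RingEquiv.ofRingHom (stmt7_swap S) (stmt7_swap S)
    (stmt7_swap_comp_swap S) (stmt7_swap_comp_swap S)

/-- The model polynomial `t + h(u, t^p) - v` in `k[u][v][t]`. -/
private noncomputable def stmt7_MD (p : ℕ) (h : MvPolynomial (Fin 2) k) :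
    Polynomial (Polynomial (Polynomial k)) :=
  Polynomial.X
    + MvPolynomial.aeval (R := k) (S₁ := Polynomial (Polynomial (Polynomial k)))
        ![Polynomial.C (Polynomial.C (Polynomial.X : Polynomial k)),
          (Polynomial.X : Polynomial (Polynomial (Polynomial k))) ^ p] h
    - Polynomial.C (Polynomial.X : Polynomial (Polynomial k))

private lemma stmt7_swap_MD (p : ℕ) (h : MvPolynomial (Fin 2) k) :
    stmt7_swap (Polynomial k) (stmt7_MD p h)
      = Polynomial.C (stmt7_phiD p h) - Polynomial.X := by
  unfold stmt7_MD stmt7_phiD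
  rw [map_sub (stmt7_swap (Polynomial k)), map_add (stmt7_swap (Polynomial k)),
    stmt7_swap_X, stmt7_swap_CX]
  congr 1
  rw [Polynomial.C_add]
  congr 1
  rw [stmt7_ringHom_aeval (stmt7_swap (Polynomial k))
      (fun c => by
        have hc : (algebraMap k (Polynomial (Polynomial (Polynomial k)))) c
            = Polynomial.C (Polynomial.C (algebraMap k (Polynomial k) c)) := by
          simp [Polynomial.algebraMap_apply]
        rw [hc, stmt7_swap_CC])
      ![Polynomial.C (Polynomial.C (Polynomial.X : Polynomial k)),
        (Polynomial.X : Polynomial (Polynomial (Polynomial k))) ^ p]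
      ![Polynomial.C (Polynomial.C (Polynomial.X : Polynomial k)),
        (Polynomial.C (Polynomial.X : Polynomial (Polynomial k))) ^ p]
      (fun i => by
        fin_cases i
        · exact stmt7_swap_CC _
        · show stmt7_swap (Polynomial k)
              ((Polynomial.X : Polynomial (Polynomial (Polynomial k))) ^ p) = _
          rw [map_pow, stmt7_swap_X]
          simp) h]
  rw [stmt7_ringHom_aeval
      (Polynomial.C : Polynomial (Polynomial k) →+* Polynomial (Polynomial (Polynomial k)))
      (fun c => by simp [Polynomial.algebraMap_apply])
      ![Polynomial.C (Polynomial.X : Polynomial k),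
        (Polynomial.X : Polynomial (Polynomial k)) ^ p]
      ![Polynomial.C (Polynomial.C (Polynomial.X : Polynomial k)),
        (Polynomial.C (Polynomial.X : Polynomial (Polynomial k))) ^ p]
      (fun i => by
        fin_cases i
        · rfl
        · show Polynomial.C ((Polynomial.X : Polynomial (Polynomial k)) ^ p) = _
          rw [map_pow]
          simp) h]

private lemma stmt7_MD_irreducible (p : ℕ) (hp2 : 2 ≤ p) (h : MvPolynomial (Fin 2) k) :
    Irreducible (stmt7_MD p h) := by
  have h1 : Irreducible (Polynomial.C (stmt7_phiD (k := k) p h) - Polynomial.X) := by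
    have h2 := Polynomial.irreducible_X_sub_C (stmt7_phiD (k := k) p h)
    have ha : Associated (Polynomial.X - Polynomial.C (stmt7_phiD (k := k) p h))
        (Polynomial.C (stmt7_phiD (k := k) p h) - Polynomial.X) :=
      ⟨⟨-1, -1, by ring, by ring⟩, by
        show (Polynomial.X - Polynomial.C (stmt7_phiD (k := k) p h)) * (-1) = _
        ring⟩
    exact ha.irreducible h2
  have := (MulEquiv.irreducible_iff (stmt7_swapEquiv (Polynomial k))).mp
    (by
      show Irreducible (stmt7_swap (Polynomial k) (stmt7_MD p h))
      rw [stmt7_swap_MD]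
      exact h1)
  exact this

private lemma stmt7_MD_coeff_one (p : ℕ) (hp2 : 2 ≤ p) (h : MvPolynomial (Fin 2) k) :
    (stmt7_MD (k := k) p h).coeff 1 = 1 := by
  unfold stmt7_MD
  rw [Polynomial.coeff_sub, Polynomial.coeff_add, Polynomial.coeff_X_one,
    stmt7_coeff_aeval p (by omega) h _ (stmt7_not_dvd_one hp2), Polynomial.coeff_C]
  simp

private lemma stmt7_MD_primitive (p : ℕ) (hp2 : 2 ≤ p) (h : MvPolynomial (Fin 2) k) :
    (stmt7_MD (k := k) p h).IsPrimitive := by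
  intro r hr
  obtain ⟨q, hq⟩ := hr
  have : (stmt7_MD (k := k) p h).coeff 1 = r * q.coeff 1 := by
    rw [hq, Polynomial.coeff_C_mul]
  rw [stmt7_MD_coeff_one p hp2 h] at this
  exact IsUnit.of_mul_eq_one (q.coeff 1) this.symm

private lemma stmt7_MD_map_irreducible (p : ℕ) (hp2 : 2 ≤ p) (h : MvPolynomial (Fin 2) k) :
    Irreducible ((stmt7_MD p h).map
      (algebraMap (Polynomial (Polynomial k))
        (FractionRing (Polynomial (Polynomial k))))) := by
  letI : NormalizationMonoid (Polynomial (Polynomial k)) :=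
    UniqueFactorizationMonoid.normalizationMonoid.toNormalizationMonoid
  letI : NormalizedGCDMonoid (Polynomial (Polynomial k)) :=
    UniqueFactorizationMonoid.toNormalizedGCDMonoid _
  exact ((stmt7_MD_primitive p hp2 h).irreducible_iff_irreducible_map_fraction_map).mp
    (stmt7_MD_irreducible p hp2 h)

/-- The evaluation map `k[u][v] → F`, `u ↦ a`, `v ↦ b`. -/
private noncomputable def stmt7_psi {F : Type*} [Field F] [Algebra k F] (a b : F) :
    Polynomial (Polynomial k) →+* F :=
  Polynomial.eval₂RingHom (Polynomial.eval₂RingHom (algebraMap k F) a) b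

private lemma stmt7_psi_CC {F : Type*} [Field F] [Algebra k F] (a b : F) (c : k) :
    stmt7_psi (k := k) a b (Polynomial.C (Polynomial.C c)) = algebraMap k F c := by
  simp [stmt7_psi]

private lemma stmt7_psi_CX {F : Type*} [Field F] [Algebra k F] (a b : F) :
    stmt7_psi (k := k) a b (Polynomial.C Polynomial.X) = a := by
  simp [stmt7_psi]

private lemma stmt7_psi_X {F : Type*} [Field F] [Algebra k F] (a b : F) :
    stmt7_psi (k := k) a b (Polynomial.X : Polynomial (Polynomial k)) = b := by
  simp [stmt7_psi]

private lemma stmt7_map_psi_MD (p : ℕ) (h : MvPolynomial (Fin 2) k)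
    {F : Type*} [Field F] [Algebra k F] (a b : F) :
    (stmt7_MD p h).map (stmt7_psi (k := k) a b)
      = Polynomial.X + MvPolynomial.aeval ![Polynomial.C a, Polynomial.X ^ p] h
          - Polynomial.C b := by
  unfold stmt7_MD
  rw [Polynomial.map_sub, Polynomial.map_add, Polynomial.map_X, Polynomial.map_C,
    stmt7_psi_X]
  congr 1
  congr 1
  have hcoe : Polynomial.map (stmt7_psi (k := k) a b)
      (MvPolynomial.aeval (R := k) (S₁ := Polynomial (Polynomial (Polynomial k)))
        ![Polynomial.C (Polynomial.C (Polynomial.X : Polynomial k)),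
          (Polynomial.X : Polynomial (Polynomial (Polynomial k))) ^ p] h)
      = (Polynomial.mapRingHom (stmt7_psi (k := k) a b))
        (MvPolynomial.aeval (R := k) (S₁ := Polynomial (Polynomial (Polynomial k)))
          ![Polynomial.C (Polynomial.C (Polynomial.X : Polynomial k)),
            (Polynomial.X : Polynomial (Polynomial (Polynomial k))) ^ p] h) := rfl
  rw [hcoe]
  rw [stmt7_ringHom_aeval (Polynomial.mapRingHom (stmt7_psi (k := k) a b))
      (fun c => by
        have hc : (algebraMap k (Polynomial (Polynomial (Polynomial k)))) c
            = Polynomial.C (Polynomial.C (Polynomial.C c)) := by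
          simp [Polynomial.algebraMap_apply]
        rw [hc]
        rw [Polynomial.coe_mapRingHom, Polynomial.map_C, stmt7_psi_CC]
        rfl)
      ![Polynomial.C (Polynomial.C (Polynomial.X : Polynomial k)),
        (Polynomial.X : Polynomial (Polynomial (Polynomial k))) ^ p]
      ![Polynomial.C a, (Polynomial.X : Polynomial F) ^ p]
      (fun i => by
        fin_cases i
        · show (Polynomial.mapRingHom (stmt7_psi (k := k) a b))
              (Polynomial.C (Polynomial.C (Polynomial.X : Polynomial k))) = Polynomial.C a
          rw [Polynomial.coe_mapRingHom, Polynomial.map_C, stmt7_psi_CX]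
        · show (Polynomial.mapRingHom (stmt7_psi (k := k) a b))
              ((Polynomial.X : Polynomial (Polynomial (Polynomial k))) ^ p)
            = (Polynomial.X : Polynomial F) ^ p
          rw [map_pow, Polynomial.coe_mapRingHom, Polynomial.map_X]) h]

/-- Main abstract step: if the evaluation `k[u][v] → F` at `(a, b)` is injective and the
induced map from the fraction field is surjective, then the target polynomial is
irreducible over `F`. -/
private theorem stmt7_abstract (p : ℕ) (hp2 : 2 ≤ p) (h : MvPolynomial (Fin 2) k)
    {F : Type*} [Field F] [Algebra k F] (a b : F)
    (hinj : Function.Injective (stmt7_psi (k := k) a b))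
    (hsurj : Function.Surjective
      (IsFractionRing.lift (A := Polynomial (Polynomial k))
        (K := FractionRing (Polynomial (Polynomial k))) hinj)) :
    Irreducible (Polynomial.X
      + MvPolynomial.aeval ![Polynomial.C a, Polynomial.X ^ p] h - Polynomial.C b) := by
  set Ψ := IsFractionRing.lift (A := Polynomial (Polynomial k))
    (K := FractionRing (Polynomial (Polynomial k))) hinj with hΨ
  have hbij : Function.Bijective Ψ := ⟨Ψ.injective, hsurj⟩
  let e : FractionRing (Polynomial (Polynomial k)) ≃+* F := RingEquiv.ofBijective Ψ hbij
  have h1 : Irreducible ((Polynomial.mapEquiv e)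
      ((stmt7_MD p h).map (algebraMap _ _))) :=
    (MulEquiv.irreducible_iff _).mpr (stmt7_MD_map_irreducible p hp2 h)
  have h2 : (Polynomial.mapEquiv e) ((stmt7_MD p h).map (algebraMap _ _))
      = (stmt7_MD p h).map (stmt7_psi (k := k) a b) := by
    rw [Polynomial.mapEquiv_apply, Polynomial.map_map]
    congr 1
    refine RingHom.ext fun x => ?_
    exact IsFractionRing.lift_algebraMap hinj x
  rw [h2, stmt7_map_psi_MD p h a b] at h1
  exact h1

/-- The evaluation `k[u][v] → k[x₁,x₂]`, `u ↦ x₁`, `v ↦ x₂`. -/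
private noncomputable def stmt7_ev :
    Polynomial (Polynomial k) →+* MvPolynomial (Fin 2) k :=
  Polynomial.eval₂RingHom
    (Polynomial.eval₂RingHom MvPolynomial.C (MvPolynomial.X 0)) (MvPolynomial.X 1)

private lemma stmt7_ev_CC (c : k) :
    stmt7_ev (k := k) (Polynomial.C (Polynomial.C c)) = MvPolynomial.C c := by
  simp [stmt7_ev]

private lemma stmt7_ev_CX :
    stmt7_ev (k := k) (Polynomial.C Polynomial.X) = MvPolynomial.X 0 := by
  simp [stmt7_ev]

private lemma stmt7_ev_X :
    stmt7_ev (k := k) Polynomial.X = MvPolynomial.X 1 := by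
  simp [stmt7_ev]

private lemma stmt7_ev_injective : Function.Injective (stmt7_ev (k := k)) := by
  have hr : (MvPolynomial.eval₂Hom
      (Polynomial.C.comp Polynomial.C : k →+* Polynomial (Polynomial k))
      ![Polynomial.C Polynomial.X, Polynomial.X]).comp (stmt7_ev (k := k))
      = RingHom.id _ := by
    apply Polynomial.ringHom_ext'
    · apply Polynomial.ringHom_ext'
      · refine RingHom.ext fun c => ?_
        show (MvPolynomial.eval₂Hom
            (Polynomial.C.comp Polynomial.C : k →+* Polynomial (Polynomial k))
            ![Polynomial.C Polynomial.X, Polynomial.X])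
            (stmt7_ev (k := k) (Polynomial.C (Polynomial.C c)))
          = Polynomial.C (Polynomial.C c)
        rw [stmt7_ev_CC]
        simp
      · show (MvPolynomial.eval₂Hom
            (Polynomial.C.comp Polynomial.C : k →+* Polynomial (Polynomial k))
            ![Polynomial.C Polynomial.X, Polynomial.X])
            (stmt7_ev (k := k) (Polynomial.C Polynomial.X))
          = Polynomial.C Polynomial.X
        rw [stmt7_ev_CX]
        simp
    · show (MvPolynomial.eval₂Hom
          (Polynomial.C.comp Polynomial.C : k →+* Polynomial (Polynomial k))
          ![Polynomial.C Polynomial.X, Polynomial.X])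
          (stmt7_ev (k := k) Polynomial.X)
        = Polynomial.X
      rw [stmt7_ev_X]
      simp
  refine Function.LeftInverse.injective
    (g := ⇑(MvPolynomial.eval₂Hom
      (Polynomial.C.comp Polynomial.C : k →+* Polynomial (Polynomial k))
      ![Polynomial.C Polynomial.X, Polynomial.X])) fun q => ?_
  rw [← RingHom.comp_apply, hr, RingHom.id_apply]

private lemma stmt7_ev_phiD (p : ℕ) (h : MvPolynomial (Fin 2) k) :
    stmt7_ev (k := k) (stmt7_phiD p h)
      = MvPolynomial.X 1
        + MvPolynomial.aeval ![MvPolynomial.X 0, MvPolynomial.X 1 ^ p] h := by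
  unfold stmt7_phiD
  rw [map_add, stmt7_ev_X]
  congr 1
  rw [stmt7_ringHom_aeval (stmt7_ev (k := k))
      (fun c => by
        rw [show (algebraMap k (Polynomial (Polynomial k))) c
            = Polynomial.C (Polynomial.C c) from by simp [Polynomial.algebraMap_apply],
          stmt7_ev_CC, MvPolynomial.algebraMap_eq])
      ![Polynomial.C (Polynomial.X : Polynomial k),
        (Polynomial.X : Polynomial (Polynomial k)) ^ p]
      ![MvPolynomial.X 0, MvPolynomial.X 1 ^ p]
      (fun i => by
        fin_cases i
        · exact stmt7_ev_CX
        · show stmt7_ev (k := k) ((Polynomial.X : Polynomial (Polynomial k)) ^ p) = _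
          rw [map_pow, stmt7_ev_X]
          simp) h]

end Stmt7Aux

theorem stmt_7 {k : Type*} [Field k] (p : ℕ) (hp : 0 < p) [CharP k p]
    (h : MvPolynomial (Fin 2) k) :
    let φ₂ : MvPolynomial (Fin 2) k := X 1 + aeval ![X 0, (X 1) ^ p] h
    let K := FractionRing (MvPolynomial (Fin 2) k)
    let ι : MvPolynomial (Fin 2) k →+* K := algebraMap _ _
    let F : IntermediateField k K := IntermediateField.adjoin k {ι (X 0), ι φ₂}
    ∀ (hx : ι (X 0) ∈ F) (hf : ι φ₂ ∈ F),
      Irreducible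
        (Polynomial.X
          + aeval ![Polynomial.C (⟨ι (X 0), hx⟩ : F), Polynomial.X ^ p] h
          - Polynomial.C (⟨ι φ₂, hf⟩ : F)) := by
  intro φ₂ K ι F hx hf
  have hpP : p.Prime := (CharP.char_is_prime_or_zero k p).resolve_right (by omega)
  have hp2 : 2 ≤ p := hpP.two_le
  have hkey : ((IntermediateField.val F).toRingHom).comp
        (stmt7_psi (k := k) (⟨ι (X 0), hx⟩ : F) (⟨ι φ₂, hf⟩ : F))
      = (ι.comp (stmt7_ev (k := k))).comp
        (Polynomial.eval₂RingHom Polynomial.C (stmt7_phiD p h)) := by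
    apply Polynomial.ringHom_ext'
    · apply Polynomial.ringHom_ext'
      · refine RingHom.ext fun c => ?_
        show F.val (stmt7_psi (k := k) (⟨ι (X 0), hx⟩ : F) (⟨ι φ₂, hf⟩ : F)
            (Polynomial.C (Polynomial.C c)))
          = ι (stmt7_ev (k := k)
              ((Polynomial.eval₂RingHom Polynomial.C (stmt7_phiD p h))
                (Polynomial.C (Polynomial.C c))))
        rw [stmt7_psi_CC, show (Polynomial.eval₂RingHom Polynomial.C (stmt7_phiD p h))
            (Polynomial.C (Polynomial.C c)) = Polynomial.C (Polynomial.C c) from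
            Polynomial.eval₂_C _ _, stmt7_ev_CC]
        rw [show ι (MvPolynomial.C c) = algebraMap k K c from by
          rw [IsScalarTower.algebraMap_apply k (MvPolynomial (Fin 2) k) K,
            MvPolynomial.algebraMap_eq]]
        exact (IntermediateField.val F).commutes c
      · show F.val (stmt7_psi (k := k) (⟨ι (X 0), hx⟩ : F) (⟨ι φ₂, hf⟩ : F)
            (Polynomial.C Polynomial.X))
          = ι (stmt7_ev (k := k)
              ((Polynomial.eval₂RingHom Polynomial.C (stmt7_phiD p h))
                (Polynomial.C Polynomial.X)))
        rw [stmt7_psi_CX, show (Polynomial.eval₂RingHom Polynomial.C (stmt7_phiD p h))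
            (Polynomial.C Polynomial.X) = Polynomial.C Polynomial.X from
            Polynomial.eval₂_C _ _, stmt7_ev_CX]
        rfl
    · show F.val (stmt7_psi (k := k) (⟨ι (X 0), hx⟩ : F) (⟨ι φ₂, hf⟩ : F) Polynomial.X)
        = ι (stmt7_ev (k := k)
            ((Polynomial.eval₂RingHom Polynomial.C (stmt7_phiD p h)) Polynomial.X))
      rw [stmt7_psi_X, show (Polynomial.eval₂RingHom Polynomial.C (stmt7_phiD p h))
          Polynomial.X = stmt7_phiD p h from Polynomial.eval₂_X _ _, stmt7_ev_phiD]
      rfl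
  have hψinj : Function.Injective
      (stmt7_psi (k := k) (⟨ι (X 0), hx⟩ : F) (⟨ι φ₂, hf⟩ : F)) := by
    have hcompinj : Function.Injective
        (⇑((ι.comp (stmt7_ev (k := k))).comp
          (Polynomial.eval₂RingHom Polynomial.C (stmt7_phiD p h)))) := by
      rw [RingHom.coe_comp, RingHom.coe_comp]
      exact ((IsFractionRing.injective (MvPolynomial (Fin 2) k) K).comp
        stmt7_ev_injective).comp (stmt7_comp_phiD_injective p hp2 h)
    intro x y hxy
    apply hcompinj
    rw [← hkey]
    show F.val (stmt7_psi (k := k) (⟨ι (X 0), hx⟩ : F) (⟨ι φ₂, hf⟩ : F) x)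
      = F.val (stmt7_psi (k := k) (⟨ι (X 0), hx⟩ : F) (⟨ι φ₂, hf⟩ : F) y)
    rw [hxy]
  have hsurj : Function.Surjective
      (IsFractionRing.lift (A := Polynomial (Polynomial k))
        (K := FractionRing (Polynomial (Polynomial k))) hψinj) := by
    set Ψ := IsFractionRing.lift (A := Polynomial (Polynomial k))
      (K := FractionRing (Polynomial (Polynomial k))) hψinj with hΨdef
    set Θ : FractionRing (Polynomial (Polynomial k)) →+* K :=
      ((IntermediateField.val F).toRingHom).comp Ψ with hΘdef
    have hΘa : ∀ c : k, algebraMap k K c ∈ Θ.fieldRange := by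
      intro c
      refine ⟨algebraMap (Polynomial (Polynomial k)) (FractionRing (Polynomial (Polynomial k)))
          (Polynomial.C (Polynomial.C c)), ?_⟩
      show F.val (Ψ (algebraMap (Polynomial (Polynomial k))
          (FractionRing (Polynomial (Polynomial k))) (Polynomial.C (Polynomial.C c)))) = algebraMap k K c
      rw [hΨdef, IsFractionRing.lift_algebraMap, stmt7_psi_CC]
      exact (IntermediateField.val F).commutes c
    have hFT : F ≤ Subfield.toIntermediateField Θ.fieldRange hΘa := by
      show IntermediateField.adjoin k {ι (X 0), ι φ₂} ≤ _
      rw [IntermediateField.adjoin_le_iff]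
      rintro x (rfl | hx)
      · refine ⟨algebraMap (Polynomial (Polynomial k)) (FractionRing (Polynomial (Polynomial k)))
            (Polynomial.C Polynomial.X), ?_⟩
        show F.val (Ψ (algebraMap (Polynomial (Polynomial k))
            (FractionRing (Polynomial (Polynomial k))) (Polynomial.C Polynomial.X))) = ι (X 0)
        rw [hΨdef, IsFractionRing.lift_algebraMap, stmt7_psi_CX]
        rfl
      · rw [Set.mem_singleton_iff] at hx
        subst hx
        refine ⟨algebraMap (Polynomial (Polynomial k)) (FractionRing (Polynomial (Polynomial k)))
            (Polynomial.X : Polynomial (Polynomial k)), ?_⟩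
        show F.val (Ψ (algebraMap (Polynomial (Polynomial k))
            (FractionRing (Polynomial (Polynomial k))) (Polynomial.X : Polynomial (Polynomial k)))) = ι φ₂
        rw [hΨdef, IsFractionRing.lift_algebraMap, stmt7_psi_X]
        rfl
    intro y
    obtain ⟨z, hz⟩ := RingHom.mem_fieldRange.mp (hFT y.2)
    exact ⟨z, Subtype.ext (by
      show F.val (Ψ z) = (y : K)
      exact hz)⟩
  exact stmt7_abstract p hp2 h _ _ hψinj hsurj
end

section
/- Let k have characteristic p > 2, let a be an integer with 1 < a < p and 2a + 1 < p not divisible by p, let α ∈ k*, and set f₁ = x₁(α x₁^{a−1} x₂^{p−a} + 1) and f₂ = x₂((aα/(a−1)) x₁^{a−1} x₂^{p−a} + 1). Then ∂(f₁,f₂)/∂(x₁,x₂) = 1, i.e., (f₁,f₂) is a Jacobian pair. -/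
open MvPolynomial

theorem stmt_13 {k : Type*} [Field k] (p : ℕ) (hp : p.Prime) (hp2 : 2 < p) [CharP k p]
    (a : ℕ) (ha1 : 1 < a) (hap : a < p) (ha2 : 2 * a + 1 < p)
    (α : k) (hα : α ≠ 0) :
    let u : MvPolynomial (Fin 2) k := X 0 ^ (a - 1) * X 1 ^ (p - a)
    let f₁ : MvPolynomial (Fin 2) k := X 0 * (C α * u + 1)
    let f₂ : MvPolynomial (Fin 2) k := X 1 * (C ((a : k) * α / ((a : k) - 1)) * u + 1)
    pderiv 0 f₁ * pderiv 1 f₂ - pderiv 1 f₁ * pderiv 0 f₂ = 1 := by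
  intro u f₁ f₂
  obtain ⟨b, rfl⟩ : ∃ b, a = b + 2 := ⟨a - 2, by omega⟩
  obtain ⟨c, rfl⟩ : ∃ c, p = b + 2 + (c + 1) := ⟨p - b - 3, by omega⟩
  have hb1 : ((b:k) + 1) ≠ 0 := by
    have : ¬ (b + 2 + (c + 1)) ∣ (b + 1) := fun h => by have := Nat.le_of_dvd (by omega) h; omega
    have := (CharP.cast_eq_zero_iff k _ (b+1)).not.mpr this
    push_cast at this; exact this
  set β : k := ((b + 2 : ℕ) : k) * α / (((b + 2 : ℕ) : k) - 1) with hβdef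
  have hk : β * ((b:k)+1) = α * ((b:k)+2) := by
    rw [hβdef]; push_cast
    rw [show ((b:k)+2-1) = (b:k)+1 by ring, div_mul_cancel₀ _ hb1]; ring
  have hβ : (C β : MvPolynomial (Fin 2) k) * ((b : MvPolynomial (Fin 2) k) + 1)
      = C α * ((b : MvPolynomial (Fin 2) k) + 2) := by
    have := congrArg (C : k →+* MvPolynomial (Fin 2) k) hk
    simpa only [map_mul, map_add, map_natCast, map_one, map_ofNat] using this
  have h2 : ((c : MvPolynomial (Fin 2) k) + 1) = -((b : MvPolynomial (Fin 2) k) + 2) := by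
    have hp0 : ((b + 2 + (c + 1) : ℕ) : MvPolynomial (Fin 2) k) = 0 := CharP.cast_eq_zero _ _
    push_cast at hp0
    linear_combination hp0
  have hrw : (((b:k)+2) * α / ((b:k)+2-1)) = β := by rw [hβdef]; push_cast; ring
  simp only [u, f₁, f₂, show b + 2 - 1 = b + 1 from rfl, show b + 2 + (c+1) - (b+2) = c + 1 by omega,
    pderiv_mul, pderiv_pow, pderiv_X_self, pderiv_C, pderiv_one, map_add, pderiv_C_mul, map_one]
  simp only [pderiv_X, Pi.single_apply, if_neg (by decide : (0:Fin 2) ≠ 1), if_neg (by decide : (1:Fin 2) ≠ 0),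
    show b + 1 - 1 = b from rfl, show c + 1 - 1 = c from rfl]
  push_cast
  rw [hrw]
  linear_combination
    (C α * C β * ((b : MvPolynomial (Fin 2) k) + 2) * (X 0 ^(b+1) * X 1^(c+1))^2
      + C β * (X 0 ^(b+1) * X 1^(c+1))
      - C α * C β * ((b : MvPolynomial (Fin 2) k) + 1) * (X 0 ^(b+1) * X 1^(c+1))^2) * h2
    + (-(X 0 ^(b+1) * X 1^(c+1))) * hβ
end

section
/- Let k have characteristic p > 0, u = x₁ x₂, and f₁ = x₁ h₁(u), f₂ = x₂ h₂(u) with h₁, h₂ ∈ k[x]. Then ∂(f₁,f₂)/∂(x₁,x₂) ∈ k* if and only if the formal derivative of u·h₁(u)·h₂(u) with respect to u is a nonzero constant, equivalently u h₁(u) h₂(u) = α u + g(u^p) for some α ∈ k* and g ∈ k[x] with g(0) = 0. -/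
open MvPolynomial

theorem stmt_15 {k : Type*} [Field k] (p : ℕ) (hp : 0 < p) [CharP k p]
    (h₁ h₂ : Polynomial k) :
    let u : MvPolynomial (Fin 2) k := X 0 * X 1
    let f₁ : MvPolynomial (Fin 2) k := X 0 * Polynomial.aeval u h₁
    let f₂ : MvPolynomial (Fin 2) k := X 1 * Polynomial.aeval u h₂
    let J := pderiv 0 f₁ * pderiv 1 f₂ - pderiv 1 f₁ * pderiv 0 f₂
    ((∃ c : k, c ≠ 0 ∧ J = C c) ↔
      (∃ α : k, α ≠ 0 ∧
        Polynomial.derivative (Polynomial.X * h₁ * h₂) = Polynomial.C α)) ∧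
    ((∃ c : k, c ≠ 0 ∧ J = C c) ↔
      (∃ α : k, α ≠ 0 ∧ ∃ g : Polynomial k, g.eval 0 = 0 ∧
        Polynomial.X * h₁ * h₂ =
          Polynomial.C α * Polynomial.X + g.comp (Polynomial.X ^ p))) := by
  intro u f₁ f₂ J
  set q : Polynomial k := Polynomial.X * h₁ * h₂ with hq
  -- J equals aeval u (derivative q)
  have hJ : J = Polynomial.aeval u (Polynomial.derivative q) := by
    simp only [J, f₁, f₂, u, hq, pderiv_mul, Derivation.map_aeval, smul_eq_mul,
      Polynomial.derivative_mul, Polynomial.derivative_X, map_add, map_mul, map_one,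
      Polynomial.aeval_X, pderiv_X_self, pderiv_X, Pi.single_eq_of_ne (by decide : (1:Fin 2) ≠ 0),
      Pi.single_eq_of_ne (by decide : (0:Fin 2) ≠ 1), Pi.single_eq_same, mul_one, mul_zero,
      add_zero, zero_add, one_mul]
    ring
  -- aeval u is injective-ish: aeval u r = C c ↔ r = C c
  have key : ∀ c : k, J = C c ↔ Polynomial.derivative q = Polynomial.C c := by
    intro c
    rw [hJ]
    constructor
    · intro h
      let ψ : MvPolynomial (Fin 2) k →ₐ[k] Polynomial k :=
        MvPolynomial.aeval (fun i => if i = 0 then Polynomial.X else 1)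
      have h2 := congrArg ψ h
      rw [← Polynomial.aeval_algHom_apply] at h2
      have hu : ψ u = Polynomial.X := by
        simp [ψ, u]
      rw [hu] at h2
      simpa [ψ, Polynomial.aeval_X_left_apply] using h2
    · intro h
      rw [h]
      simp [algebraMap_eq]
  constructor
  · constructor
    · rintro ⟨c, hc, hJc⟩; exact ⟨c, hc, (key c).1 hJc⟩
    · rintro ⟨α, hα, hd⟩; exact ⟨α, hα, (key α).2 hd⟩
  · constructor
    · rintro ⟨c, hc, hJc⟩
      have hd := (key c).1 hJc
      refine ⟨c, hc, ?_⟩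
      have hzero : Polynomial.derivative (q - Polynomial.C c * Polynomial.X) = 0 := by
        simp [hd]
      set g : Polynomial k := (q - Polynomial.C c * Polynomial.X).contract p with hg
      have hexp : Polynomial.expand k p g = q - Polynomial.C c * Polynomial.X :=
        Polynomial.expand_contract p hzero hp.ne'
      refine ⟨g, ?_, ?_⟩
      · have := congrArg (Polynomial.eval 0) hexp
        rw [Polynomial.expand_eval, zero_pow hp.ne'] at this
        simpa [hq] using this
      · rw [← Polynomial.expand_eq_comp_X_pow, hexp]; ring
    · rintro ⟨α, hα, g, hg0, hrep⟩
      refine ⟨α, hα, (key α).2 ?_⟩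
      rw [hrep, ← Polynomial.expand_eq_comp_X_pow]
      have : Polynomial.derivative (Polynomial.expand k p g) = 0 := by
        rw [Polynomial.expand_eq_comp_X_pow, Polynomial.derivative_comp,
          Polynomial.derivative_X_pow]
        simp [CharP.cast_eq_zero k p]
      simp [this]
end
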